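/- Let G be a locally compact Hausdorff group with left Haar measure and modular function Δ, acting properly on a locally compact Hausdorff space X. Let c: X → [0,1] be a continuous cut-off function, i.e. c has compact support on every G-compact subset of X and ∫_G c(g⁻¹·x)² dg = 1 for all x ∈ X. Fix x ∈ X and define c_x: G → ℝ by c_x(g) = √(Δ(g⁻¹)) · c(g·x). Then: (a) c_x is a unit vector in L²(G) and satisfies c_x(gk) = c_x(g) for all g ∈ G and all k in the stabilizer G_x; (b) for every ξ ∈ L²(G), the function h ↦ ∫_G Δ(g⁻¹h) c_x(g⁻¹h) c_x(h) ξ(g⁻¹h) dg equals ⟨ξ, c_x⟩·c_x in L²(G); hence this integral operator is the orthogonal rank-one projection of L²(G) onto ℂ·c_x. -/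

import Mathlib

open MeasureTheory Filter Set Function
open scoped NNReal ENNReal
set_option linter.unusedSectionVars false
set_option maxHeartbeats 1000000

/-- A continuous action of `G` on `X` is *proper* if the map
`G × X → X × X, (g,x) ↦ (g • x, x)` is proper, i.e. preimages of compact sets
are compact. -/
def ProperAction (G X : Type*) [SMul G X] [TopologicalSpace G]
    [TopologicalSpace X] : Prop :=
  ∀ K : Set (X × X), IsCompact K →
    IsCompact ((fun p : G × X => (p.1 • p.2, p.2)) ⁻¹' K)

section Aux

variable {G : Type*} [Group G] [TopologicalSpace G] [IsTopologicalGroup G]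
  [MeasurableSpace G] [BorelSpace G]

lemma aux_inv_integral (μ : Measure G) (Dnn : G → ℝ≥0) (hD : Measurable Dnn)
    {E : Type*} [NormedAddCommGroup E] [NormedSpace ℝ E] (f : G → E)
    (hf : AEStronglyMeasurable f ((μ.withDensity fun g => ((Dnn g : ℝ≥0∞))).inv)) :
    ∫ g, f g ∂(μ.withDensity fun g => ((Dnn g : ℝ≥0∞))).inv = ∫ g, Dnn g • f g⁻¹ ∂μ := by
  rw [Measure.inv_def] at hf ⊢
  rw [integral_map measurable_inv.aemeasurable hf]
  exact integral_withDensity_eq_integral_smul hD _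

lemma aux_integral_transfer {μ ν : Measure G}
    (hagree : ∀ s : Set G, IsCompact (closure s) → ν s = μ s)
    {E : Type*} [NormedAddCommGroup E] [NormedSpace ℝ E] (f : G → E)
    (K : Set G) (hK : IsCompact K) (hKc : IsClosed K) (h0 : ∀ g ∉ K, f g = 0) :
    ∫ g, f g ∂ν = ∫ g, f g ∂μ := by
  have hres : ν.restrict K = μ.restrict K := by
    ext A hA
    rw [Measure.restrict_apply hA, Measure.restrict_apply hA]
    exact hagree _ (hK.of_isClosed_subset isClosed_closure
      (closure_minimal inter_subset_right hKc))
  rw [← setIntegral_eq_integral_of_forall_compl_eq_zero (μ := ν) (s := K) h0,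
    ← setIntegral_eq_integral_of_forall_compl_eq_zero (μ := μ) (s := K) h0, hres]

end Aux

section Haar

variable {G : Type*} [Group G] [TopologicalSpace G] [IsTopologicalGroup G]
  [LocallyCompactSpace G] [T2Space G] [MeasurableSpace G] [BorelSpace G]

/-- The core inversion fact: `map inv (Δ(g⁻¹) dμ(g))` agrees with `μ` on all sets with
compact closure. -/
lemma aux_haar_inversion (μ : Measure G) [μ.IsHaarMeasure]
    (Δ : G → ℝ) (hΔpos : ∀ g, 0 < Δ g) (hΔcont : Continuous Δ)
    (hΔmul : ∀ g h : G, Δ (g * h) = Δ g * Δ h)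
    (hΔright : ∀ s : G,
      Measure.map (fun g : G => g * s) μ = ENNReal.ofReal (Δ s⁻¹) • μ) :
    ∀ s : Set G, IsCompact (closure s) →
      (μ.withDensity fun g => (((Δ g⁻¹).toNNReal : ℝ≥0) : ℝ≥0∞)).inv s = μ s := by
  have hΔ1 : Δ 1 = 1 := by
    have h := hΔmul 1 1
    rw [one_mul] at h
    have h2 : Δ 1 * 1 = Δ 1 * Δ 1 := by rw [mul_one]; exact h
    exact (mul_left_cancel₀ (hΔpos 1).ne' h2).symm
  have hΔinv : ∀ g : G, Δ g⁻¹ * Δ g = 1 := fun g => by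
    rw [← hΔmul, inv_mul_cancel, hΔ1]
  have hcoe : ∀ g : G, (((Δ g⁻¹).toNNReal : ℝ≥0) : ℝ) = Δ g⁻¹ :=
    fun g => Real.coe_toNNReal _ (hΔpos _).le
  set Dnn : G → ℝ≥0 := fun g => (Δ g⁻¹).toNNReal with hDnn_def
  have hDnn : Measurable Dnn :=
    (continuous_real_toNNReal.comp (hΔcont.comp continuous_inv)).measurable
  have hDnnE : Measurable fun g => ((Dnn g : ℝ≥0) : ℝ≥0∞) := hDnn.coe_nnreal_ennreal
  set ρ : Measure G := μ.withDensity fun g => ((Dnn g : ℝ≥0) : ℝ≥0∞) with hρ_def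
  -- right invariance of ρ
  have hρ_right : ∀ s : G, Measure.map (fun g => g * s) ρ = ρ := by
    intro s
    refine Measure.ext fun A hA => ?_
    rw [Measure.map_apply (measurable_mul_const s) hA, hρ_def,
      withDensity_apply _ (hA.preimage (measurable_mul_const s)), withDensity_apply _ hA]
    have h1 : ∫⁻ g in A, ((Dnn g : ℝ≥0) : ℝ≥0∞) ∂(Measure.map (fun g : G => g * s) μ)
        = ∫⁻ g in (fun g : G => g * s) ⁻¹' A, ((Dnn (g * s) : ℝ≥0) : ℝ≥0∞) ∂μ :=
      setLIntegral_map hA hDnnE (measurable_mul_const s)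
    rw [hΔright s, Measure.restrict_smul, lintegral_smul_measure] at h1
    have h2 : ∀ g : G, ((Dnn (g * s) : ℝ≥0) : ℝ≥0∞)
        = ENNReal.ofReal (Δ s⁻¹) * ((Dnn g : ℝ≥0) : ℝ≥0∞) := by
      intro g
      have h3 : Δ (g * s)⁻¹ = Δ s⁻¹ * Δ g⁻¹ := by rw [mul_inv_rev, hΔmul]
      show ENNReal.ofReal (Δ (g * s)⁻¹) = _
      rw [h3, ENNReal.ofReal_mul (hΔpos s⁻¹).le]
      rfl
    have h4 : ∫⁻ g in (fun g : G => g * s) ⁻¹' A, ((Dnn (g * s) : ℝ≥0) : ℝ≥0∞) ∂μ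
        = ENNReal.ofReal (Δ s⁻¹) * ∫⁻ g in (fun g : G => g * s) ⁻¹' A,
            ((Dnn g : ℝ≥0) : ℝ≥0∞) ∂μ := by
      simp_rw [h2]
      exact lintegral_const_mul _ hDnnE
    rw [h4] at h1
    exact (ENNReal.mul_right_inj (ENNReal.ofReal_pos.mpr (hΔpos s⁻¹)).ne'
      ENNReal.ofReal_ne_top).mp h1.symm
  haveI hρ_ri : ρ.IsMulRightInvariant := ⟨hρ_right⟩
  haveI hρ_fc : IsFiniteMeasureOnCompacts ρ := by
    constructor
    intro K hK
    obtain ⟨M, hM⟩ : ∃ M : ℝ, ∀ g ∈ K, Δ g⁻¹ ≤ M := by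
      rcases K.eq_empty_or_nonempty with h | h
      · exact ⟨0, by simp [h]⟩
      · obtain ⟨g₀, hg₀K, hmax⟩ := hK.exists_isMaxOn h
          ((hΔcont.comp continuous_inv).continuousOn)
        exact ⟨Δ g₀⁻¹, fun g hg => hmax hg⟩
    have hle : ρ K ≤ ENNReal.ofReal M * μ K := by
      rw [hρ_def, withDensity_apply _ hK.measurableSet]
      calc ∫⁻ g in K, ((Dnn g : ℝ≥0) : ℝ≥0∞) ∂μ
          ≤ ∫⁻ _ in K, ENNReal.ofReal M ∂μ := by
            refine setLIntegral_mono measurable_const fun g hg => ?_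
            show ENNReal.ofReal (Δ g⁻¹) ≤ _
            exact ENNReal.ofReal_le_ofReal (hM g hg)
        _ = ENNReal.ofReal M * μ K := by rw [setLIntegral_const]
    exact lt_of_le_of_lt hle
      (ENNReal.mul_lt_top ENNReal.ofReal_lt_top hK.measure_lt_top)
  -- the scalar factor is 1
  have hk_int : ∀ f : G → ℝ, Continuous f → HasCompactSupport f →
      ∫ g, f g ∂ρ.inv = ((ρ.inv.haarScalarFactor μ : ℝ≥0) : ℝ) * ∫ g, f g ∂μ := by
    intro f hf h'f
    rw [Measure.integral_isMulLeftInvariant_eq_smul_of_hasCompactSupport ρ.inv μ hf h'f,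
      integral_smul_nnreal_measure, NNReal.smul_def, smul_eq_mul]
  have hrel : ∀ f : G → ℝ, Continuous f → HasCompactSupport f →
      ∫ g, Δ g⁻¹ * f g⁻¹ ∂μ = ((ρ.inv.haarScalarFactor μ : ℝ≥0) : ℝ) * ∫ g, f g ∂μ := by
    intro f hf h'f
    have h1 : ∫ g, f g ∂ρ.inv = ∫ g, Dnn g • f g⁻¹ ∂μ :=
      aux_inv_integral μ Dnn hDnn f hf.aestronglyMeasurable
    have h2 : ∫ g, Dnn g • f g⁻¹ ∂μ = ∫ g, Δ g⁻¹ * f g⁻¹ ∂μ := by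
      simp_rw [NNReal.smul_def, smul_eq_mul]
      exact integral_congr_ae (Filter.Eventually.of_forall fun g => congrArg (· * f g⁻¹) (hcoe g))
    rw [← h2, ← h1, hk_int f hf h'f]
  have hk1 : ((ρ.inv.haarScalarFactor μ : ℝ≥0) : ℝ) = 1 := by
    obtain ⟨f₀, hf₀cpt, hf₀nonneg, hf₀pos⟩ := exists_continuous_nonneg_pos (1 : G)
    have hf₀cont : Continuous f₀ := f₀.continuous
    have hint_pos : 0 < ∫ g, f₀ g ∂μ := by
      have hi : Integrable f₀ μ := hf₀cont.integrable_of_hasCompactSupport hf₀cpt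
      rw [integral_pos_iff_support_of_nonneg hf₀nonneg hi]
      have hopen : IsOpen (support (f₀ : G → ℝ)) := hf₀cont.isOpen_support
      exact hopen.measure_pos μ ⟨1, hf₀pos⟩
    set f₁ : G → ℝ := fun g => Δ g⁻¹ * f₀ g⁻¹ with hf₁_def
    have hf₁cont : Continuous f₁ :=
      (hΔcont.comp continuous_inv).mul (hf₀cont.comp continuous_inv)
    have hf₁cpt : HasCompactSupport f₁ := by
      have h := hf₀cpt.comp_homeomorph (Homeomorph.inv G)
      exact h.mul_left
    have e1 : ∫ g, f₁ g ∂μ = ((ρ.inv.haarScalarFactor μ : ℝ≥0) : ℝ) * ∫ g, f₀ g ∂μ :=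
      hrel f₀ hf₀cont hf₀cpt
    have e2 : ∫ g, Δ g⁻¹ * f₁ g⁻¹ ∂μ
        = ((ρ.inv.haarScalarFactor μ : ℝ≥0) : ℝ) * ∫ g, f₁ g ∂μ := hrel f₁ hf₁cont hf₁cpt
    have e3 : ∀ g : G, Δ g⁻¹ * f₁ g⁻¹ = f₀ g := by
      intro g
      rw [hf₁_def]
      simp only [inv_inv]
      calc Δ g⁻¹ * (Δ g * f₀ g) = (Δ g⁻¹ * Δ g) * f₀ g := by ring
        _ = f₀ g := by rw [hΔinv, one_mul]
    simp_rw [e3] at e2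
    rw [e1] at e2
    have h5 : (((ρ.inv.haarScalarFactor μ : ℝ≥0) : ℝ) * ((ρ.inv.haarScalarFactor μ : ℝ≥0) : ℝ))
        * ∫ g, f₀ g ∂μ = ∫ g, f₀ g ∂μ := by
      conv_rhs => rw [e2]
      ring
    have hk2 : ((ρ.inv.haarScalarFactor μ : ℝ≥0) : ℝ) * ((ρ.inv.haarScalarFactor μ : ℝ≥0) : ℝ)
        = 1 := by
      refine mul_right_cancel₀ hint_pos.ne' ?_
      rw [one_mul]; exact h5
    rcases mul_self_eq_one_iff.mp hk2 with h | h
    · exact h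
    · nlinarith [NNReal.coe_nonneg (ρ.inv.haarScalarFactor μ)]
  intro s hs
  have h := Measure.measure_isMulInvariant_eq_smul_of_isCompact_closure ρ.inv μ hs
  have hk1' : ρ.inv.haarScalarFactor μ = 1 := NNReal.coe_injective (by simp [hk1])
  rw [h, hk1', one_smul]

end Haar

section Full

variable {G : Type*} [Group G] [TopologicalSpace G] [IsTopologicalGroup G]
  [LocallyCompactSpace G] [T2Space G] [MeasurableSpace G] [BorelSpace G]

/-- The combined inversion formula: for a strongly measurable function supported in a
compact set, `∫ Δ(g⁻¹) • f(g⁻¹) dμ(g) = ∫ f dμ`. -/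
lemma aux_full (μ : Measure G) [μ.IsHaarMeasure]
    (Δ : G → ℝ) (hΔpos : ∀ g, 0 < Δ g) (hΔcont : Continuous Δ)
    (hΔmul : ∀ g h : G, Δ (g * h) = Δ g * Δ h)
    (hΔright : ∀ s : G,
      Measure.map (fun g : G => g * s) μ = ENNReal.ofReal (Δ s⁻¹) • μ)
    {E : Type*} [NormedAddCommGroup E] [NormedSpace ℝ E] (f : G → E)
    (hf : StronglyMeasurable f)
    (K : Set G) (hK : IsCompact K) (hKc : IsClosed K) (h0 : ∀ g ∉ K, f g = 0) :
    ∫ g, Δ g⁻¹ • f g⁻¹ ∂μ = ∫ g, f g ∂μ := by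
  have hDnn : Measurable fun g : G => (Δ g⁻¹).toNNReal :=
    (continuous_real_toNNReal.comp (hΔcont.comp continuous_inv)).measurable
  have h1 := aux_inv_integral μ (fun g => (Δ g⁻¹).toNNReal) hDnn f
    hf.aestronglyMeasurable
  have h2 := aux_integral_transfer
    (aux_haar_inversion μ Δ hΔpos hΔcont hΔmul hΔright) f K hK hKc h0
  calc ∫ g, Δ g⁻¹ • f g⁻¹ ∂μ
      = ∫ g, (Δ g⁻¹).toNNReal • f g⁻¹ ∂μ := by
        refine integral_congr_ae (Filter.Eventually.of_forall fun g => ?_)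
        show Δ g⁻¹ • f g⁻¹ = (Δ g⁻¹).toNNReal • f g⁻¹
        rw [NNReal.smul_def, Real.coe_toNNReal _ (hΔpos g⁻¹).le]
    _ = ∫ g, f g ∂(μ.withDensity fun g : G => (((Δ g⁻¹).toNNReal : ℝ≥0) : ℝ≥0∞)).inv :=
        h1.symm
    _ = ∫ g, f g ∂μ := h2

end Full

theorem cutoff_gives_rank_one_projection
    (G : Type*) [Group G] [TopologicalSpace G] [IsTopologicalGroup G]
    [LocallyCompactSpace G] [T2Space G]
    [MeasurableSpace G] [BorelSpace G]
    (μ : Measure G) [μ.IsHaarMeasure]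
    (Δ : G → ℝ) (hΔpos : ∀ g, 0 < Δ g) (hΔcont : Continuous Δ)
    (hΔmul : ∀ g h : G, Δ (g * h) = Δ g * Δ h)
    (hΔright : ∀ s : G,
      Measure.map (fun g : G => g * s) μ = ENNReal.ofReal (Δ s⁻¹) • μ)
    (X : Type*) [TopologicalSpace X] [LocallyCompactSpace X] [T2Space X]
    [MulAction G X] [ContinuousSMul G X] (hproper : ProperAction G X)
    (c : X → ℝ) (hc_cont : Continuous c)
    (hc_mem : ∀ y : X, c y ∈ Set.Icc (0 : ℝ) 1)
    (hc_supp : ∀ Y : Set X, IsClosed Y →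
      (∀ (g : G) (y : X), y ∈ Y → g • y ∈ Y) →
      IsCompact (Quotient.mk (MulAction.orbitRel G X) '' Y) →
      IsCompact (closure (Y ∩ Function.support c)))
    (hc_int : ∀ y : X, ∫ g : G, (c (g⁻¹ • y)) ^ 2 ∂μ = 1)
    (x : X) :
    (MemLp (fun g : G => Real.sqrt (Δ g⁻¹) * c (g • x)) 2 μ) ∧
    (∫ g : G, (Real.sqrt (Δ g⁻¹) * c (g • x)) ^ 2 ∂μ = 1) ∧
    (∀ g : G, ∀ k ∈ MulAction.stabilizer G x,
      Real.sqrt (Δ (g * k)⁻¹) * c ((g * k) • x)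
        = Real.sqrt (Δ g⁻¹) * c (g • x)) ∧
    (∀ ξ : G → ℂ, MemLp ξ 2 μ → ∀ h : G,
      (∫ g : G,
          ((Δ (g⁻¹ * h) * (Real.sqrt (Δ (g⁻¹ * h)⁻¹) * c ((g⁻¹ * h) • x))
              * (Real.sqrt (Δ h⁻¹) * c (h • x)) : ℝ) : ℂ) * ξ (g⁻¹ * h) ∂μ)
        = (∫ g : G, ξ g * ((Real.sqrt (Δ g⁻¹) * c (g • x) : ℝ) : ℂ) ∂μ)
            * ((Real.sqrt (Δ h⁻¹) * c (h • x) : ℝ) : ℂ)) := by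
  -- basic facts about Δ
  have hΔ1 : Δ 1 = 1 := by
    have h := hΔmul 1 1
    rw [one_mul] at h
    have h2 : Δ 1 * 1 = Δ 1 * Δ 1 := by rw [mul_one]; exact h
    exact (mul_left_cancel₀ (hΔpos 1).ne' h2).symm
  have hΔinv : ∀ g : G, Δ g⁻¹ * Δ g = 1 := fun g => by
    rw [← hΔmul, inv_mul_cancel, hΔ1]
  -- preimages of compact sets under the orbit map are compact
  have hsmul_cont : Continuous fun g : G => g • x := continuous_id.smul continuous_const
  have hpre : ∀ K : Set X, IsCompact K → IsCompact ((fun g : G => g • x) ⁻¹' K) := by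
    intro K hK
    have h2 := hproper (K ×ˢ ({x} : Set X)) (hK.prod isCompact_singleton)
    have heq : (fun g : G => g • x) ⁻¹' K
        = Prod.fst '' ((fun p : G × X => (p.1 • p.2, p.2)) ⁻¹' (K ×ˢ ({x} : Set X))) := by
      ext g
      constructor
      · intro hg
        refine ⟨(g, x), ?_, rfl⟩
        simp only [Set.mem_preimage, Set.mem_prod, Set.mem_singleton_iff]
        exact ⟨hg, trivial⟩
      · rintro ⟨⟨g', y⟩, hp, rfl⟩
        simp only [Set.mem_preimage, Set.mem_prod, Set.mem_singleton_iff] at hp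
        rcases hp with ⟨h1, h2'⟩
        subst h2'
        exact h1
    rw [heq]
    exact h2.image continuous_fst
  -- the orbit of x is closed
  have horb_inv : ∀ (g : G) (y : X), y ∈ MulAction.orbit G x →
      g • y ∈ MulAction.orbit G x := by
    rintro g y ⟨g', rfl⟩
    exact ⟨g * g', mul_smul g g' x⟩
  have horb_closed : IsClosed (MulAction.orbit G x) := by
    refine isClosed_of_closure_subset ?_
    intro y hy
    obtain ⟨V, hVc, hVn⟩ := exists_compact_mem_nhds y
    have hTc : IsCompact ((fun g : G => g • x) '' ((fun g : G => g • x) ⁻¹' V)) :=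
      (hpre V hVc).image hsmul_cont
    have hsub : MulAction.orbit G x ∩ V
        ⊆ (fun g : G => g • x) '' ((fun g : G => g • x) ⁻¹' V) := by
      rintro z ⟨⟨g', rfl⟩, hzV⟩
      exact ⟨g', hzV, rfl⟩
    have hyT : y ∈ (fun g : G => g • x) '' ((fun g : G => g • x) ⁻¹' V) := by
      have h1 : y ∈ closure (MulAction.orbit G x ∩ V) := by
        rw [mem_closure_iff_nhds] at hy ⊢
        intro U hU
        rcases hy (U ∩ V) (Filter.inter_mem hU hVn) with ⟨z, ⟨hzU, hzV⟩, hzO⟩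
        exact ⟨z, hzU, hzO, hzV⟩
      exact hTc.isClosed.closure_eq ▸ closure_mono hsub h1
    rcases hyT with ⟨g', _, rfl⟩
    exact ⟨g', rfl⟩
  -- the compact set controlling the support
  have himg : IsCompact (Quotient.mk (MulAction.orbitRel G X) '' (MulAction.orbit G x)) := by
    have heq : Quotient.mk (MulAction.orbitRel G X) '' (MulAction.orbit G x)
        = {Quotient.mk (MulAction.orbitRel G X) x} := by
      apply Set.Subset.antisymm
      · rintro q ⟨y, ⟨g', rfl⟩, rfl⟩
        exact Quotient.sound ⟨g', rfl⟩
      · rintro q rfl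
        exact ⟨x, MulAction.mem_orbit_self x, rfl⟩
    rw [heq]
    exact isCompact_singleton
  have hK₀ : IsCompact (closure (MulAction.orbit G x ∩ Function.support c)) :=
    hc_supp _ horb_closed horb_inv himg
  have hS_cpt : IsCompact ((fun g : G => g • x) ⁻¹'
      closure (MulAction.orbit G x ∩ Function.support c)) := hpre _ hK₀
  have hS_closed : IsClosed ((fun g : G => g • x) ⁻¹'
      closure (MulAction.orbit G x ∩ Function.support c)) :=
    isClosed_closure.preimage hsmul_cont
  have hS_meas : MeasurableSet ((fun g : G => g • x) ⁻¹'
      closure (MulAction.orbit G x ∩ Function.support c)) := hS_closed.measurableSet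
  have hsupp_c : ∀ g : G, g ∉ ((fun g : G => g • x) ⁻¹'
      closure (MulAction.orbit G x ∩ Function.support c)) → c (g • x) = 0 := by
    intro g hg
    by_contra h0
    exact hg (subset_closure ⟨⟨g, rfl⟩, h0⟩)
  have hmemS : ∀ g : G, c (g • x) ≠ 0 → g ∈ ((fun g : G => g • x) ⁻¹'
      closure (MulAction.orbit G x ∩ Function.support c)) := by
    intro g h0
    exact subset_closure ⟨⟨g, rfl⟩, h0⟩
  -- the inverse of that set
  have hSinv_closed : IsClosed ((fun g : G => g⁻¹) ⁻¹' ((fun g : G => g • x) ⁻¹'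
      closure (MulAction.orbit G x ∩ Function.support c))) :=
    hS_closed.preimage continuous_inv
  have hSinv_cpt : IsCompact ((fun g : G => g⁻¹) ⁻¹' ((fun g : G => g • x) ⁻¹'
      closure (MulAction.orbit G x ∩ Function.support c))) := by
    have heq : ((fun g : G => g⁻¹) ⁻¹' ((fun g : G => g • x) ⁻¹'
        closure (MulAction.orbit G x ∩ Function.support c)))
        = (fun g : G => g⁻¹) '' ((fun g : G => g • x) ⁻¹'
        closure (MulAction.orbit G x ∩ Function.support c)) := by
      ext g
      constructor
      · intro hg
        exact ⟨g⁻¹, hg, inv_inv g⟩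
      · rintro ⟨a, ha, rfl⟩
        simpa using ha
    rw [heq]
    exact hS_cpt.image continuous_inv
  -- Δ is trivial on the stabilizer
  have hΔstab : ∀ k ∈ MulAction.stabilizer G x, Δ k = 1 := by
    have hstab_set : ((MulAction.stabilizer G x : Subgroup G) : Set G)
        = (fun g : G => g • x) ⁻¹' {x} := by
      ext g
      simp [MulAction.mem_stabilizer_iff]
    have hcpt : IsCompact ((MulAction.stabilizer G x : Subgroup G) : Set G) := by
      rw [hstab_set]
      exact hpre _ isCompact_singleton
    obtain ⟨g₀, hg₀, hmax⟩ := hcpt.exists_isMaxOn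
      ⟨1, SetLike.mem_coe.mpr (one_mem _)⟩ hΔcont.continuousOn
    have hpowΔ : ∀ (u : G) (n : ℕ), Δ (u ^ n) = Δ u ^ n := by
      intro u n
      induction n with
      | zero => simpa using hΔ1
      | succ n ih => rw [pow_succ, pow_succ, hΔmul, ih]
    have hle1 : ∀ k ∈ MulAction.stabilizer G x, Δ k ≤ 1 := by
      intro k hk
      by_contra hgt
      push_neg at hgt
      obtain ⟨n, hn⟩ := pow_unbounded_of_one_lt (Δ g₀) hgt
      have hmem : k ^ n ∈ MulAction.stabilizer G x := pow_mem hk n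
      have hb : Δ (k ^ n) ≤ Δ g₀ := hmax (SetLike.mem_coe.mpr hmem)
      rw [hpowΔ] at hb
      exact absurd hb (not_le.mpr hn)
    intro k hk
    have h1 := hle1 k hk
    have h2 := hle1 k⁻¹ (inv_mem hk)
    have h3 := hΔinv k
    nlinarith [hΔpos k, hΔpos k⁻¹]
  -- part 1
  have hf_cont : Continuous fun g : G => Real.sqrt (Δ g⁻¹) * c (g • x) :=
    (Real.continuous_sqrt.comp (hΔcont.comp continuous_inv)).mul
      (hc_cont.comp hsmul_cont)
  have hc_cpt : HasCompactSupport fun g : G => c (g • x) :=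
    HasCompactSupport.intro hS_cpt fun g hg => hsupp_c g hg
  have hf_cpt : HasCompactSupport fun g : G => Real.sqrt (Δ g⁻¹) * c (g • x) :=
    hc_cpt.mul_left
  have part1 : MemLp (fun g : G => Real.sqrt (Δ g⁻¹) * c (g • x)) 2 μ :=
    hf_cont.memLp_of_hasCompactSupport hf_cpt
  -- part 2
  have part2 : ∫ g : G, (Real.sqrt (Δ g⁻¹) * c (g • x)) ^ 2 ∂μ = 1 := by
    have hφsm : StronglyMeasurable fun u : G => (c (u⁻¹ • x)) ^ 2 :=
      ((hc_cont.comp (continuous_inv.smul continuous_const)).pow 2).stronglyMeasurable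
    calc ∫ g : G, (Real.sqrt (Δ g⁻¹) * c (g • x)) ^ 2 ∂μ
        = ∫ g : G, Δ g⁻¹ • (c (g⁻¹⁻¹ • x)) ^ 2 ∂μ := by
          refine integral_congr_ae (Filter.Eventually.of_forall fun g => ?_)
          simp only [inv_inv, smul_eq_mul]
          rw [mul_pow, Real.sq_sqrt (hΔpos g⁻¹).le]
      _ = ∫ u : G, (c (u⁻¹ • x)) ^ 2 ∂μ := by
          refine aux_full μ Δ hΔpos hΔcont hΔmul hΔright _ hφsm
            ((fun g : G => g⁻¹) ⁻¹' ((fun g : G => g • x) ⁻¹'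
              closure (MulAction.orbit G x ∩ Function.support c)))
            hSinv_cpt hSinv_closed ?_
          intro g hg
          have h0 : c (g⁻¹ • x) = 0 := by
            by_contra hne
            exact hg (hmemS g⁻¹ hne)
          simp [h0]
      _ = 1 := hc_int x
  refine ⟨part1, part2, ?_, ?_⟩
  · -- part 3
    intro g k hk
    have h1 : (g * k) • x = g • x := by
      rw [mul_smul, MulAction.mem_stabilizer_iff.mp hk]
    have h2 : Δ (g * k)⁻¹ = Δ g⁻¹ := by
      rw [mul_inv_rev, hΔmul, hΔstab k⁻¹ (inv_mem hk), one_mul]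
    rw [h1, h2]
  · -- part 4
    intro ξ hξ h
    obtain ⟨ξ', hξ'sm, hξae⟩ : ∃ ξ' : G → ℂ, StronglyMeasurable ξ' ∧ ξ =ᵐ[μ] ξ' :=
      ⟨hξ.aestronglyMeasurable.mk ξ, hξ.aestronglyMeasurable.stronglyMeasurable_mk,
        hξ.aestronglyMeasurable.ae_eq_mk⟩
    obtain ⟨N, hNmeas, hNnull, hsubN⟩ : ∃ N : Set G, MeasurableSet N ∧ μ N = 0 ∧
        {a : G | ξ a ≠ ξ' a} ⊆ N :=
      ⟨toMeasurable μ {a | ξ a ≠ ξ' a}, measurableSet_toMeasurable _ _,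
        by rw [measure_toMeasurable]; exact ae_iff.mp hξae, subset_toMeasurable _ _⟩
    -- the inverted null set has measure zero
    have hWnull : μ ((fun g : G => g⁻¹) ⁻¹' (N ∩ ((fun g : G => g • x) ⁻¹'
        closure (MulAction.orbit G x ∩ Function.support c)))) = 0 := by
      have hW0 : μ (N ∩ ((fun g : G => g • x) ⁻¹'
          closure (MulAction.orbit G x ∩ Function.support c))) = 0 :=
        measure_mono_null Set.inter_subset_left hNnull
      have hcl : IsCompact (closure ((fun g : G => g⁻¹) ⁻¹' (N ∩ ((fun g : G => g • x) ⁻¹'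
          closure (MulAction.orbit G x ∩ Function.support c))))) :=
        hSinv_cpt.of_isClosed_subset isClosed_closure
          (closure_minimal (Set.preimage_mono Set.inter_subset_right) hSinv_closed)
      have h1 : (μ.withDensity fun g : G => (((Δ g⁻¹).toNNReal : ℝ≥0) : ℝ≥0∞)).inv
          ((fun g : G => g⁻¹) ⁻¹' (N ∩ ((fun g : G => g • x) ⁻¹'
            closure (MulAction.orbit G x ∩ Function.support c))))
          = (μ.withDensity fun g : G => (((Δ g⁻¹).toNNReal : ℝ≥0) : ℝ≥0∞))
          (N ∩ ((fun g : G => g • x) ⁻¹'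
            closure (MulAction.orbit G x ∩ Function.support c))) := by
        rw [Measure.inv_apply]
        congr 1
        ext a
        simp [Set.mem_inv]
      have h2 : (μ.withDensity fun g : G => (((Δ g⁻¹).toNNReal : ℝ≥0) : ℝ≥0∞))
          (N ∩ ((fun g : G => g • x) ⁻¹'
            closure (MulAction.orbit G x ∩ Function.support c))) = 0 :=
        withDensity_absolutelyContinuous μ _ hW0
      calc μ ((fun g : G => g⁻¹) ⁻¹' (N ∩ ((fun g : G => g • x) ⁻¹'
          closure (MulAction.orbit G x ∩ Function.support c))))
          = (μ.withDensity fun g : G => (((Δ g⁻¹).toNNReal : ℝ≥0) : ℝ≥0∞)).inv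
            ((fun g : G => g⁻¹) ⁻¹' (N ∩ ((fun g : G => g • x) ⁻¹'
              closure (MulAction.orbit G x ∩ Function.support c)))) :=
            (aux_haar_inversion μ Δ hΔpos hΔcont hΔmul hΔright _ hcl).symm
        _ = 0 := h1.trans h2
    have hχsm : StronglyMeasurable fun u : G =>
        ((Real.sqrt (Δ u⁻¹) * c (u • x) : ℝ) : ℂ) * ξ' u :=
      ((Complex.continuous_ofReal.comp hf_cont).stronglyMeasurable).mul hξ'sm
    calc (∫ g : G,
          ((Δ (g⁻¹ * h) * (Real.sqrt (Δ (g⁻¹ * h)⁻¹) * c ((g⁻¹ * h) • x))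
              * (Real.sqrt (Δ h⁻¹) * c (h • x)) : ℝ) : ℂ) * ξ (g⁻¹ * h) ∂μ)
        = ∫ g : G,
          ((Δ (g⁻¹ * h) * (Real.sqrt (Δ (g⁻¹ * h)⁻¹) * c ((g⁻¹ * h) • x))
              * (Real.sqrt (Δ h⁻¹) * c (h • x)) : ℝ) : ℂ) * ξ' (g⁻¹ * h) ∂μ := by
          refine integral_congr_ae ?_
          rw [Filter.EventuallyEq, ae_iff]
          refine measure_mono_null ?_ (by
            rw [measure_preimage_mul]
            exact hWnull : μ ((fun a : G => h⁻¹ * a) ⁻¹' ((fun g : G => g⁻¹) ⁻¹'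
              (N ∩ ((fun g : G => g • x) ⁻¹'
                closure (MulAction.orbit G x ∩ Function.support c))))) = 0)
          intro g hg
          simp only [Set.mem_setOf_eq] at hg
          have hne : ξ (g⁻¹ * h) ≠ ξ' (g⁻¹ * h) := fun hEq => hg (by rw [hEq])
          have hcne : c ((g⁻¹ * h) • x) ≠ 0 := by
            intro h0
            apply hg
            rw [h0]
            simp
          show g ∈ (fun a : G => h⁻¹ * a) ⁻¹' ((fun g : G => g⁻¹) ⁻¹'
            (N ∩ ((fun g : G => g • x) ⁻¹'
              closure (MulAction.orbit G x ∩ Function.support c))))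
          simp only [Set.mem_preimage, Set.mem_inter_iff, mul_inv_rev, inv_inv]
          exact ⟨hsubN hne, hmemS _ hcne⟩
      _ = ((Real.sqrt (Δ h⁻¹) * c (h • x) : ℝ) : ℂ) * ∫ g : G,
          ((Δ (g⁻¹ * h) * (Real.sqrt (Δ (g⁻¹ * h)⁻¹) * c ((g⁻¹ * h) • x)) : ℝ) : ℂ)
            * ξ' (g⁻¹ * h) ∂μ := by
          rw [← integral_const_mul]
          refine integral_congr_ae (Filter.Eventually.of_forall fun g => ?_)
          push_cast
          ring
      _ = ((Real.sqrt (Δ h⁻¹) * c (h • x) : ℝ) : ℂ) * ∫ g : G,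
          ((Δ g⁻¹ * (Real.sqrt (Δ g⁻¹⁻¹) * c (g⁻¹ • x)) : ℝ) : ℂ) * ξ' g⁻¹ ∂μ := by
          congr 1
          calc ∫ g : G,
              ((Δ (g⁻¹ * h) * (Real.sqrt (Δ (g⁻¹ * h)⁻¹) * c ((g⁻¹ * h) • x)) : ℝ) : ℂ)
                * ξ' (g⁻¹ * h) ∂μ
              = ∫ g : G, (fun a : G =>
                  ((Δ a⁻¹ * (Real.sqrt (Δ a⁻¹⁻¹) * c (a⁻¹ • x)) : ℝ) : ℂ) * ξ' a⁻¹)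
                  (h⁻¹ * g) ∂μ := by
                refine integral_congr_ae (Filter.Eventually.of_forall fun g => ?_)
                show _ = ((Δ (h⁻¹ * g)⁻¹ * (Real.sqrt (Δ (h⁻¹ * g)⁻¹⁻¹)
                    * c ((h⁻¹ * g)⁻¹ • x)) : ℝ) : ℂ) * ξ' (h⁻¹ * g)⁻¹
                rw [mul_inv_rev, inv_inv]
            _ = ∫ g : G, (fun a : G =>
                  ((Δ a⁻¹ * (Real.sqrt (Δ a⁻¹⁻¹) * c (a⁻¹ • x)) : ℝ) : ℂ) * ξ' a⁻¹)
                  g ∂μ := integral_mul_left_eq_self (μ := μ)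
                  (fun a : G =>
                    ((Δ a⁻¹ * (Real.sqrt (Δ a⁻¹⁻¹) * c (a⁻¹ • x)) : ℝ) : ℂ) * ξ' a⁻¹) h⁻¹
            _ = ∫ g : G,
                  ((Δ g⁻¹ * (Real.sqrt (Δ g⁻¹⁻¹) * c (g⁻¹ • x)) : ℝ) : ℂ) * ξ' g⁻¹ ∂μ :=
                rfl
      _ = ((Real.sqrt (Δ h⁻¹) * c (h • x) : ℝ) : ℂ) * ∫ g : G,
          Δ g⁻¹ • (((Real.sqrt (Δ g⁻¹⁻¹) * c (g⁻¹ • x) : ℝ) : ℂ) * ξ' g⁻¹) ∂μ := by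
          congr 1
          refine integral_congr_ae (Filter.Eventually.of_forall fun g => ?_)
          show ((Δ g⁻¹ * (Real.sqrt (Δ g⁻¹⁻¹) * c (g⁻¹ • x)) : ℝ) : ℂ) * ξ' g⁻¹
            = Δ g⁻¹ • (((Real.sqrt (Δ g⁻¹⁻¹) * c (g⁻¹ • x) : ℝ) : ℂ) * ξ' g⁻¹)
          rw [Complex.real_smul]
          push_cast
          ring
      _ = ((Real.sqrt (Δ h⁻¹) * c (h • x) : ℝ) : ℂ) * ∫ u : G,
          ((Real.sqrt (Δ u⁻¹) * c (u • x) : ℝ) : ℂ) * ξ' u ∂μ := by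
          congr 1
          refine aux_full μ Δ hΔpos hΔcont hΔmul hΔright _ hχsm
            ((fun g : G => g • x) ⁻¹'
              closure (MulAction.orbit G x ∩ Function.support c))
            hS_cpt hS_closed ?_
          intro g hg
          have h0 : c (g • x) = 0 := hsupp_c g hg
          simp [h0]
      _ = ((Real.sqrt (Δ h⁻¹) * c (h • x) : ℝ) : ℂ) * ∫ u : G,
          ξ u * ((Real.sqrt (Δ u⁻¹) * c (u • x) : ℝ) : ℂ) ∂μ := by
          congr 1
          refine integral_congr_ae ?_
          rw [Filter.EventuallyEq, ae_iff]
          refine measure_mono_null ?_ hNnull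
          intro u hu
          simp only [Set.mem_setOf_eq] at hu
          refine hsubN ?_
          intro hEq
          apply hu
          rw [hEq]
          ring
      _ = (∫ g : G, ξ g * ((Real.sqrt (Δ g⁻¹) * c (g • x) : ℝ) : ℂ) ∂μ)
            * ((Real.sqrt (Δ h⁻¹) * c (h • x) : ℝ) : ℂ) := mul_comm _ _
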